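/- Let h ∈ (0,2) with h ≠ 1, and define c_h(s,t) = sgn(h−1)·[(s+t)^h − s^h − t^h] for s,t ≥ 0. Then c_h is a positive semidefinite kernel on [0,∞): for every n, every t_1,…,t_n ≥ 0 and every a_1,…,a_n ∈ ℝ, Σ_{i,j=1}^n a_i a_j c_h(t_i, t_j) ≥ 0. -/

import Mathlib

open MeasureTheory Set Real

lemma one_sub_exp_le' (u : ℝ) : 1 - Real.exp (-u) ≤ u := by
  nlinarith [Real.add_one_le_exp (-u)]

lemma expA_nonneg' (u : ℝ) : 0 ≤ Real.exp (-u) - 1 + u := by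
  nlinarith [Real.add_one_le_exp (-u)]

lemma expA_le_sq' {u : ℝ} (hu : 0 ≤ u) : Real.exp (-u) - 1 + u ≤ u ^ 2 := by
  have h2 : Real.exp (-u) ≤ (1 + u)⁻¹ := by
    rw [Real.exp_neg]
    exact inv_anti₀ (by linarith) (by nlinarith [Real.add_one_le_exp u])
  have h3 : (0:ℝ) < 1 + u := by linarith
  have h4 : (1 + u) * (1 + u)⁻¹ = 1 := mul_inv_cancel₀ h3.ne'
  nlinarith [mul_le_mul_of_nonneg_left h2 h3.le]

lemma expA_le' {u : ℝ} (hu : 0 ≤ u) : Real.exp (-u) - 1 + u ≤ u := by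
  nlinarith [Real.exp_le_one_iff.mpr (neg_nonpos.mpr hu)]

lemma one_sub_exp_nonneg' {u : ℝ} (hu : 0 ≤ u) : 0 ≤ 1 - Real.exp (-u) := by
  nlinarith [Real.exp_le_one_iff.mpr (neg_nonpos.mpr hu)]

lemma one_sub_exp_le_one' (u : ℝ) : 1 - Real.exp (-u) ≤ 1 := by
  nlinarith [Real.exp_nonneg (-u)]

-- rpow helpers
lemma rpow_merge1 {x : ℝ} (hx : 0 < x) (h : ℝ) : x * x ^ (-1-h) = x ^ (-h) := by
  nth_rewrite 1 [← Real.rpow_one x]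
  rw [← Real.rpow_add hx]; ring_nf

lemma rpow_merge2 {x : ℝ} (hx : 0 < x) (h : ℝ) : x ^ 2 * x ^ (-1-h) = x ^ (1-h) := by
  rw [← Real.rpow_natCast x 2, ← Real.rpow_add hx]
  norm_num
  ring_nf


lemma bound_lo {x s h : ℝ} (hx : 0 < x) (hs : 0 ≤ s) :
    |(1 - Real.exp (-(x*s))) * x ^ (-1-h)| ≤ s * x ^ (-h) := by
  have hxs : 0 ≤ x * s := mul_nonneg hx.le hs
  have hp : (0:ℝ) ≤ x ^ (-1-h) := Real.rpow_nonneg hx.le _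
  rw [abs_of_nonneg (mul_nonneg (one_sub_exp_nonneg' hxs) hp)]
  calc (1 - Real.exp (-(x*s))) * x ^ (-1-h) ≤ (x*s) * x ^ (-1-h) :=
        mul_le_mul_of_nonneg_right (one_sub_exp_le' _) hp
    _ = s * (x * x ^ (-1-h)) := by ring
    _ = s * x ^ (-h) := by rw [rpow_merge1 hx]

lemma bound_lo_tail {x s h : ℝ} (hx : 0 < x) (hs : 0 ≤ s) :
    |(1 - Real.exp (-(x*s))) * x ^ (-1-h)| ≤ 1 * x ^ (-1-h) := by
  have hxs : 0 ≤ x * s := mul_nonneg hx.le hs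
  have hp : (0:ℝ) ≤ x ^ (-1-h) := Real.rpow_nonneg hx.le _
  rw [abs_of_nonneg (mul_nonneg (one_sub_exp_nonneg' hxs) hp)]
  exact mul_le_mul_of_nonneg_right (one_sub_exp_le_one' _) hp

lemma bound_hi {x s h : ℝ} (hx : 0 < x) (hs : 0 ≤ s) :
    |(Real.exp (-(x*s)) - 1 + x*s) * x ^ (-1-h)| ≤ s^2 * x ^ (1-h) := by
  have hxs : 0 ≤ x * s := mul_nonneg hx.le hs
  have hp : (0:ℝ) ≤ x ^ (-1-h) := Real.rpow_nonneg hx.le _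
  rw [abs_of_nonneg (mul_nonneg (expA_nonneg' _) hp)]
  calc (Real.exp (-(x*s)) - 1 + x*s) * x ^ (-1-h) ≤ (x*s)^2 * x ^ (-1-h) :=
        mul_le_mul_of_nonneg_right (expA_le_sq' hxs) hp
    _ = s^2 * (x^2 * x ^ (-1-h)) := by ring
    _ = s^2 * x ^ (1-h) := by rw [rpow_merge2 hx]

lemma bound_hi_tail {x s h : ℝ} (hx : 0 < x) (hs : 0 ≤ s) :
    |(Real.exp (-(x*s)) - 1 + x*s) * x ^ (-1-h)| ≤ s * x ^ (-h) := by
  have hxs : 0 ≤ x * s := mul_nonneg hx.le hs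
  have hp : (0:ℝ) ≤ x ^ (-1-h) := Real.rpow_nonneg hx.le _
  rw [abs_of_nonneg (mul_nonneg (expA_nonneg' _) hp)]
  calc (Real.exp (-(x*s)) - 1 + x*s) * x ^ (-1-h) ≤ (x*s) * x ^ (-1-h) :=
        mul_le_mul_of_nonneg_right (expA_le' hxs) hp
    _ = s * (x * x ^ (-1-h)) := by ring
    _ = s * x ^ (-h) := by rw [rpow_merge1 hx]

lemma bound_J {x s t h : ℝ} (hx : 0 < x) (hs : 0 ≤ s) (ht : 0 ≤ t) :
    |(1 - Real.exp (-(x*s))) * (1 - Real.exp (-(x*t))) * x ^ (-1-h)| ≤ (s*t) * x ^ (1-h) := by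
  have hxs : 0 ≤ x * s := mul_nonneg hx.le hs
  have hxt : 0 ≤ x * t := mul_nonneg hx.le ht
  have hp : (0:ℝ) ≤ x ^ (-1-h) := Real.rpow_nonneg hx.le _
  rw [abs_of_nonneg (mul_nonneg (mul_nonneg (one_sub_exp_nonneg' hxs) (one_sub_exp_nonneg' hxt)) hp)]
  calc (1 - Real.exp (-(x*s))) * (1 - Real.exp (-(x*t))) * x ^ (-1-h)
      ≤ (x*s) * (x*t) * x ^ (-1-h) := by
        refine mul_le_mul_of_nonneg_right ?_ hp
        exact mul_le_mul (one_sub_exp_le' _) (one_sub_exp_le' _) (one_sub_exp_nonneg' hxt) hxs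
    _ = (s*t) * (x^2 * x ^ (-1-h)) := by ring
    _ = (s*t) * x ^ (1-h) := by rw [rpow_merge2 hx]

lemma bound_J_tail {x s t h : ℝ} (hx : 0 < x) (hs : 0 ≤ s) (ht : 0 ≤ t) :
    |(1 - Real.exp (-(x*s))) * (1 - Real.exp (-(x*t))) * x ^ (-1-h)| ≤ 1 * x ^ (-1-h) := by
  have hxs : 0 ≤ x * s := mul_nonneg hx.le hs
  have hxt : 0 ≤ x * t := mul_nonneg hx.le ht
  have hp : (0:ℝ) ≤ x ^ (-1-h) := Real.rpow_nonneg hx.le _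
  rw [abs_of_nonneg (mul_nonneg (mul_nonneg (one_sub_exp_nonneg' hxs) (one_sub_exp_nonneg' hxt)) hp)]
  refine mul_le_mul_of_nonneg_right ?_ hp
  calc (1 - Real.exp (-(x*s))) * (1 - Real.exp (-(x*t)))
      ≤ 1 * 1 := mul_le_mul (one_sub_exp_le_one' _) (one_sub_exp_le_one' _) (one_sub_exp_nonneg' hxt) zero_le_one
    _ = 1 := one_mul 1

lemma contOn_mul_rpow {g : ℝ → ℝ} (hg : Continuous g) (h : ℝ) :
    ContinuousOn (fun x : ℝ => g x * x ^ (-1-h)) (Ioi 0) := by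
  refine hg.continuousOn.mul ?_
  intro x hx
  exact (Real.continuousAt_rpow_const x _ (Or.inl (ne_of_gt hx))).continuousWithinAt

lemma integrableOn_aux {f : ℝ → ℝ} (hf : ContinuousOn f (Ioi 0))
    {p q C D : ℝ} (hp : -1 < p) (hq : q < -1)
    (h1 : ∀ x ∈ Ioc (0:ℝ) 1, |f x| ≤ C * x ^ p)
    (h2 : ∀ x ∈ Ioi (1:ℝ), |f x| ≤ D * x ^ q) :
    IntegrableOn f (Ioi (0:ℝ)) := by
  have hm : AEStronglyMeasurable f (volume.restrict (Ioi (0:ℝ))) :=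
    hf.aestronglyMeasurable measurableSet_Ioi
  rw [← Ioc_union_Ioi_eq_Ioi (zero_le_one (α := ℝ)), integrableOn_union]
  constructor
  · have hint : IntegrableOn (fun x : ℝ => C * x ^ p) (Ioc (0:ℝ) 1) := by
      rw [integrableOn_Ioc_iff_integrableOn_Ioo]
      exact ((intervalIntegral.integrableOn_Ioo_rpow_iff one_pos).mpr hp).const_mul C
    refine hint.mono' (hm.mono_measure (Measure.restrict_mono Ioc_subset_Ioi_self le_rfl)) ?_
    exact (ae_restrict_iff' measurableSet_Ioc).mpr (ae_of_all _ fun x hx => by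
      simpa [Real.norm_eq_abs] using h1 x hx)
  · have hint : IntegrableOn (fun x : ℝ => D * x ^ q) (Ioi (1:ℝ)) :=
      (integrableOn_Ioi_rpow_of_lt hq one_pos).const_mul D
    refine hint.mono' (hm.mono_measure (Measure.restrict_mono (Ioi_subset_Ioi zero_le_one) le_rfl)) ?_
    exact (ae_restrict_iff' measurableSet_Ioi).mpr (ae_of_all _ fun x hx => by
      simpa [Real.norm_eq_abs] using h2 x hx)

lemma setIntegral_pos_aux {f : ℝ → ℝ} (hint : IntegrableOn f (Ioi (0:ℝ)))
    (hnn : ∀ x ∈ Ioi (0:ℝ), 0 ≤ f x) {c : ℝ} (hc : 0 < c)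
    (hlb : ∀ x ∈ Ioc (1:ℝ) 2, c ≤ f x) :
    0 < ∫ x in Ioi (0:ℝ), f x := by
  have hsub : Ioc (1:ℝ) 2 ⊆ Ioi 0 := fun x hx => lt_trans one_pos hx.1
  have hint2 : IntegrableOn f (Ioc (1:ℝ) 2) := hint.mono hsub le_rfl
  have h1 : ∫ x in Ioc (1:ℝ) 2, f x ≤ ∫ x in Ioi (0:ℝ), f x := by
    refine setIntegral_mono_set hint ?_ (HasSubset.Subset.eventuallyLE hsub)
    exact (ae_restrict_iff' measurableSet_Ioi).mpr (ae_of_all _ hnn)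
  have h2 : c * (volume (Ioc (1:ℝ) 2)).toReal ≤ ∫ x in Ioc (1:ℝ) 2, f x :=
    setIntegral_ge_of_const_le_real measurableSet_Ioc (by simp) hlb hint2
  have h3 : (volume (Ioc (1:ℝ) 2)).toReal = 1 := by
    rw [Real.volume_Ioc]; norm_num
  rw [h3] at h2; nlinarith

noncomputable def philo (h s : ℝ) : ℝ :=
  ∫ x in Ioi (0:ℝ), (1 - Real.exp (-(x*s))) * x ^ (-1-h)

noncomputable def phihi (h s : ℝ) : ℝ :=
  ∫ x in Ioi (0:ℝ), (Real.exp (-(x*s)) - 1 + x*s) * x ^ (-1-h)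

noncomputable def Jker (h s t : ℝ) : ℝ :=
  ∫ x in Ioi (0:ℝ), (1 - Real.exp (-(x*s))) * (1 - Real.exp (-(x*t))) * x ^ (-1-h)

lemma integrableOn_philo {h s : ℝ} (h0 : 0 < h) (h1 : h < 1) (hs : 0 ≤ s) :
    IntegrableOn (fun x : ℝ => (1 - Real.exp (-(x*s))) * x ^ (-1-h)) (Ioi (0:ℝ)) := by
  refine integrableOn_aux (contOn_mul_rpow (by continuity) h) (p := -h) (q := -1-h) (C := s) (D := 1)
    (by linarith) (by linarith) ?_ ?_
  · exact fun x hx => bound_lo hx.1 hs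
  · exact fun x hx => bound_lo_tail (lt_trans one_pos hx) hs

lemma integrableOn_phihi {h s : ℝ} (h1 : 1 < h) (h2 : h < 2) (hs : 0 ≤ s) :
    IntegrableOn (fun x : ℝ => (Real.exp (-(x*s)) - 1 + x*s) * x ^ (-1-h)) (Ioi (0:ℝ)) := by
  refine integrableOn_aux (contOn_mul_rpow (by continuity) h) (p := 1-h) (q := -h) (C := s^2) (D := s)
    (by linarith) (by linarith) ?_ ?_
  · exact fun x hx => bound_hi hx.1 hs
  · exact fun x hx => bound_hi_tail (lt_trans one_pos hx) hs

lemma integrableOn_Jker {h s t : ℝ} (h0 : 0 < h) (h2 : h < 2) (hs : 0 ≤ s) (ht : 0 ≤ t) :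
    IntegrableOn (fun x : ℝ =>
      (1 - Real.exp (-(x*s))) * (1 - Real.exp (-(x*t))) * x ^ (-1-h)) (Ioi (0:ℝ)) := by
  refine integrableOn_aux (contOn_mul_rpow (by continuity) h) (p := 1-h) (q := -1-h) (C := s*t) (D := 1)
    (by linarith) (by linarith) ?_ ?_
  · exact fun x hx => bound_J hx.1 hs ht
  · exact fun x hx => bound_J_tail (lt_trans one_pos hx) hs ht

lemma scale_aux {F : ℝ → ℝ} {h s : ℝ} (hs : 0 < s) :
    ∫ x in Ioi (0:ℝ), F (s*x) * x ^ (-1-h) = s ^ h * ∫ x in Ioi (0:ℝ), F x * x ^ (-1-h) := by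
  have key : ∫ x in Ioi (0:ℝ), F (s*x) * x ^ (-1-h)
      = s ^ (1+h) * ∫ x in Ioi (0:ℝ), (fun u => F u * u ^ (-1-h)) (s*x) := by
    rw [← integral_const_mul]
    refine setIntegral_congr_fun measurableSet_Ioi (fun x hx => ?_)
    have hx0 : (0:ℝ) < x := hx
    have hmul : (s * x) ^ (-1-h) = s ^ (-1-h) * x ^ (-1-h) := Real.mul_rpow hs.le hx0.le
    have hss : s ^ (1+h) * s ^ (-1-h) = 1 := by
      rw [← Real.rpow_add hs]; norm_num
    calc F (s*x) * x ^ (-1-h) = (s ^ (1+h) * s ^ (-1-h)) * (F (s*x) * x ^ (-1-h)) := by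
          rw [hss, one_mul]
      _ = s ^ (1+h) * (F (s*x) * (s*x) ^ (-1-h)) := by rw [hmul]; ring
  rw [key, MeasureTheory.integral_comp_mul_left_Ioi (fun u => F u * u ^ (-1-h)) 0 hs, mul_zero,
    smul_eq_mul, ← mul_assoc]
  congr 1
  rw [Real.rpow_add hs, Real.rpow_one]
  field_simp

lemma philo_zero (h : ℝ) : philo h 0 = 0 := by
  unfold philo; simp

lemma phihi_zero (h : ℝ) : phihi h 0 = 0 := by
  unfold phihi; simp

lemma philo_scale {h s : ℝ} (h0 : 0 < h) (hs : 0 ≤ s) :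
    philo h s = s ^ h * philo h 1 := by
  rcases eq_or_lt_of_le hs with rfl | hs'
  · rw [philo_zero, Real.zero_rpow (ne_of_gt h0), zero_mul]
  · have e1 : philo h s = ∫ x in Ioi (0:ℝ), (fun u => 1 - Real.exp (-u)) (s*x) * x ^ (-1-h) := by
      unfold philo
      congr 1
      funext x
      simp [mul_comm]
    have e2 : philo h 1 = ∫ x in Ioi (0:ℝ), (fun u => 1 - Real.exp (-u)) x * x ^ (-1-h) := by
      unfold philo
      congr 1
      funext x
      simp
    rw [e1, e2]
    exact scale_aux (F := fun u => 1 - Real.exp (-u)) hs'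

lemma phihi_scale {h s : ℝ} (h0 : 0 < h) (hs : 0 ≤ s) :
    phihi h s = s ^ h * phihi h 1 := by
  rcases eq_or_lt_of_le hs with rfl | hs'
  · rw [phihi_zero, Real.zero_rpow (ne_of_gt h0), zero_mul]
  · have e1 : phihi h s = ∫ x in Ioi (0:ℝ), (fun u => Real.exp (-u) - 1 + u) (s*x) * x ^ (-1-h) := by
      unfold phihi
      congr 1
      funext x
      simp [mul_comm]
    have e2 : phihi h 1 = ∫ x in Ioi (0:ℝ), (fun u => Real.exp (-u) - 1 + u) x * x ^ (-1-h) := by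
      unfold phihi
      congr 1
      funext x
      simp
    rw [e1, e2]
    exact scale_aux (F := fun u => Real.exp (-u) - 1 + u) hs'

lemma Jker_philo {h s t : ℝ} (h0 : 0 < h) (h1 : h < 1) (hs : 0 ≤ s) (ht : 0 ≤ t) :
    Jker h s t = philo h s + philo h t - philo h (s+t) := by
  have Is := integrableOn_philo h0 h1 hs
  have It := integrableOn_philo h0 h1 ht
  have Ist := integrableOn_philo h0 h1 (add_nonneg hs ht)
  have Iadd : Integrable (fun x : ℝ => (1 - Real.exp (-(x*s))) * x ^ (-1-h)
      + (1 - Real.exp (-(x*t))) * x ^ (-1-h)) (volume.restrict (Ioi 0)) := Is.add It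
  have main : ∫ x in Ioi (0:ℝ), ((1 - Real.exp (-(x*s))) * x ^ (-1-h)
      + (1 - Real.exp (-(x*t))) * x ^ (-1-h) - (1 - Real.exp (-(x*(s+t)))) * x ^ (-1-h))
      = philo h s + philo h t - philo h (s+t) := by
    rw [integral_sub Iadd Ist, integral_add Is It]
    rfl
  rw [← main]
  unfold Jker
  refine setIntegral_congr_fun measurableSet_Ioi (fun x hx => ?_)
  have hexp : Real.exp (-(x*(s+t))) = Real.exp (-(x*s)) * Real.exp (-(x*t)) := by
    rw [← Real.exp_add]; congr 1; ring
  simp only [hexp]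
  ring

lemma Jker_phihi {h s t : ℝ} (h1 : 1 < h) (h2 : h < 2) (hs : 0 ≤ s) (ht : 0 ≤ t) :
    Jker h s t = phihi h (s+t) - phihi h s - phihi h t := by
  have Is := integrableOn_phihi h1 h2 hs
  have It := integrableOn_phihi h1 h2 ht
  have Ist := integrableOn_phihi h1 h2 (add_nonneg hs ht)
  have Isub : Integrable (fun x : ℝ => (Real.exp (-(x*(s+t))) - 1 + x*(s+t)) * x ^ (-1-h)
      - (Real.exp (-(x*s)) - 1 + x*s) * x ^ (-1-h)) (volume.restrict (Ioi 0)) := Ist.sub Is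
  have main : ∫ x in Ioi (0:ℝ), ((Real.exp (-(x*(s+t))) - 1 + x*(s+t)) * x ^ (-1-h)
      - (Real.exp (-(x*s)) - 1 + x*s) * x ^ (-1-h) - (Real.exp (-(x*t)) - 1 + x*t) * x ^ (-1-h))
      = phihi h (s+t) - phihi h s - phihi h t := by
    rw [integral_sub Isub It, integral_sub Ist Is]
    rfl
  rw [← main]
  unfold Jker
  refine setIntegral_congr_fun measurableSet_Ioi (fun x hx => ?_)
  have hexp : Real.exp (-(x*(s+t))) = Real.exp (-(x*s)) * Real.exp (-(x*t)) := by
    rw [← Real.exp_add]; congr 1; ring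
  simp only [hexp]
  ring

lemma philo_one_pos {h : ℝ} (h0 : 0 < h) (h1 : h < 1) : 0 < philo h 1 := by
  unfold philo
  refine setIntegral_pos_aux (integrableOn_philo h0 h1 zero_le_one) ?_
    (c := (1 - Real.exp (-1)) * 2 ^ (-1-h)) ?_ ?_
  · intro x hx
    exact mul_nonneg (one_sub_exp_nonneg' (mul_nonneg (le_of_lt hx) zero_le_one))
      (Real.rpow_nonneg (le_of_lt hx) _)
  · have : Real.exp (-1) < 1 := Real.exp_lt_one_iff.mpr (by norm_num)
    exact mul_pos (by linarith) (Real.rpow_pos_of_pos two_pos _)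
  · intro x hx
    have hx1 : (1:ℝ) ≤ x := le_of_lt hx.1
    have e1 : Real.exp (-(x*1)) ≤ Real.exp (-1) := by
      apply Real.exp_le_exp.mpr; rw [mul_one]; linarith
    have e2 : (2:ℝ) ^ (-1-h) ≤ x ^ (-1-h) :=
      Real.rpow_le_rpow_of_nonpos (lt_of_lt_of_le one_pos hx1) hx.2 (by linarith)
    exact mul_le_mul (by linarith) e2 (Real.rpow_nonneg two_pos.le _)
      (one_sub_exp_nonneg' (mul_nonneg (by linarith) zero_le_one))

lemma phihi_one_pos {h : ℝ} (h1 : 1 < h) (h2 : h < 2) : 0 < phihi h 1 := by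
  unfold phihi
  refine setIntegral_pos_aux (integrableOn_phihi h1 h2 zero_le_one) ?_
    (c := Real.exp (-2) * 2 ^ (-1-h)) ?_ ?_
  · intro x hx
    exact mul_nonneg (expA_nonneg' _) (Real.rpow_nonneg (le_of_lt hx) _)
  · exact mul_pos (Real.exp_pos _) (Real.rpow_pos_of_pos two_pos _)
  · intro x hx
    have e1 : Real.exp (-2) ≤ Real.exp (-(x*1)) - 1 + x*1 := by
      have hle : Real.exp (-2) ≤ Real.exp (-(x*1)) := by
        apply Real.exp_le_exp.mpr; rw [mul_one]; linarith [hx.2]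
      have hx1 : (1:ℝ) ≤ x := le_of_lt hx.1
      nlinarith
    have e2 : (2:ℝ) ^ (-1-h) ≤ x ^ (-1-h) :=
      Real.rpow_le_rpow_of_nonpos (lt_trans one_pos hx.1) hx.2 (by linarith)
    exact mul_le_mul e1 e2 (Real.rpow_nonneg two_pos.le _) (expA_nonneg' _)

noncomputable def KK (h : ℝ) : ℝ := if h < 1 then philo h 1 else phihi h 1

lemma KK_pos {h : ℝ} (hh : h ∈ Ioo (0:ℝ) 2) (hne : h ≠ 1) : 0 < KK h := by
  unfold KK
  rcases lt_or_gt_of_ne hne with hlt | hgt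
  · rw [if_pos hlt]; exact philo_one_pos hh.1 hlt
  · rw [if_neg (not_lt.mpr hgt.le)]; exact phihi_one_pos hgt hh.2

/-- The kernel `c_h(s,t) = sgn(h-1) · [(s+t)^h − s^h − t^h]`. -/
noncomputable def cCovSgn (h s t : ℝ) : ℝ :=
  Real.sign (h - 1) * ((s + t) ^ h - s ^ h - t ^ h)

lemma KK_mul {h : ℝ} (hh : h ∈ Ioo (0:ℝ) 2) (hne : h ≠ 1) {s t : ℝ} (hs : 0 ≤ s) (ht : 0 ≤ t) :
    KK h * cCovSgn h s t = Jker h s t := by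
  obtain ⟨h0, h2⟩ := hh
  unfold KK cCovSgn
  rcases lt_or_gt_of_ne hne with hlt | hgt
  · rw [if_pos hlt, Real.sign_of_neg (by linarith : h - 1 < 0)]
    rw [Jker_philo h0 hlt hs ht, philo_scale h0 hs, philo_scale h0 ht,
      philo_scale h0 (add_nonneg hs ht)]
    ring
  · rw [if_neg (not_lt.mpr hgt.le), Real.sign_of_pos (by linarith : (0:ℝ) < h - 1)]
    rw [Jker_phihi hgt h2 hs ht, phihi_scale h0 hs, phihi_scale h0 ht,
      phihi_scale h0 (add_nonneg hs ht)]
    ring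

lemma Jquad {h : ℝ} (h0 : 0 < h) (h2 : h < 2) (n : ℕ) (t a : Fin n → ℝ) (ht : ∀ i, 0 ≤ t i) :
    0 ≤ ∑ i : Fin n, ∑ j : Fin n, a i * a j * Jker h (t i) (t j) := by
  have hint : ∀ i j : Fin n, IntegrableOn
      (fun x : ℝ => a i * a j * ((1 - Real.exp (-(x * t i))) * (1 - Real.exp (-(x * t j))) * x ^ (-1-h)))
      (Ioi (0:ℝ)) := fun i j => (integrableOn_Jker h0 h2 (ht i) (ht j)).const_mul _
  have key : ∑ i : Fin n, ∑ j : Fin n, a i * a j * Jker h (t i) (t j)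
      = ∫ x in Ioi (0:ℝ), (∑ i : Fin n, a i * (1 - Real.exp (-(x * t i))))^2 * x ^ (-1-h) := by
    have e1 : ∀ i j : Fin n, a i * a j * Jker h (t i) (t j)
        = ∫ x in Ioi (0:ℝ), a i * a j * ((1 - Real.exp (-(x * t i))) * (1 - Real.exp (-(x * t j))) * x ^ (-1-h)) := by
      intro i j; unfold Jker; rw [integral_const_mul]
    calc ∑ i : Fin n, ∑ j : Fin n, a i * a j * Jker h (t i) (t j)
        = ∑ i : Fin n, ∑ j : Fin n, ∫ x in Ioi (0:ℝ),
            a i * a j * ((1 - Real.exp (-(x * t i))) * (1 - Real.exp (-(x * t j))) * x ^ (-1-h)) :=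
          Finset.sum_congr rfl fun i _ => Finset.sum_congr rfl fun j _ => e1 i j
      _ = ∑ i : Fin n, ∫ x in Ioi (0:ℝ), ∑ j : Fin n,
            a i * a j * ((1 - Real.exp (-(x * t i))) * (1 - Real.exp (-(x * t j))) * x ^ (-1-h)) := by
          refine Finset.sum_congr rfl fun i _ => ?_
          rw [integral_finset_sum _ (fun j _ => hint i j)]
      _ = ∫ x in Ioi (0:ℝ), ∑ i : Fin n, ∑ j : Fin n,
            a i * a j * ((1 - Real.exp (-(x * t i))) * (1 - Real.exp (-(x * t j))) * x ^ (-1-h)) := by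
          rw [integral_finset_sum _ (fun i _ => integrable_finset_sum _ (fun j _ => hint i j))]
      _ = ∫ x in Ioi (0:ℝ), (∑ i : Fin n, a i * (1 - Real.exp (-(x * t i))))^2 * x ^ (-1-h) := by
          refine setIntegral_congr_fun measurableSet_Ioi (fun x hx => ?_)
          rw [sq, Finset.sum_mul_sum, Finset.sum_mul]
          refine Finset.sum_congr rfl fun i _ => ?_
          rw [Finset.sum_mul]
          exact Finset.sum_congr rfl fun j _ => by ring
  rw [key]
  exact setIntegral_nonneg measurableSet_Ioi fun x hx =>
    mul_nonneg (sq_nonneg _) (Real.rpow_nonneg (le_of_lt hx) _)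

theorem stmt5 (h : ℝ) (hh : h ∈ Set.Ioo (0:ℝ) 2) (hne : h ≠ 1) :
    ∀ (n : ℕ) (t : Fin n → ℝ) (a : Fin n → ℝ), (∀ i, 0 ≤ t i) →
      0 ≤ ∑ i : Fin n, ∑ j : Fin n, a i * a j * cCovSgn h (t i) (t j) := by
  intro n t a ht
  have hK := KK_pos hh hne
  have key : KK h * ∑ i : Fin n, ∑ j : Fin n, a i * a j * cCovSgn h (t i) (t j)
      = ∑ i : Fin n, ∑ j : Fin n, a i * a j * Jker h (t i) (t j) := by
    rw [Finset.mul_sum]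
    refine Finset.sum_congr rfl fun i _ => ?_
    rw [Finset.mul_sum]
    refine Finset.sum_congr rfl fun j _ => ?_
    rw [← KK_mul hh hne (ht i) (ht j)]
    ring
  have hq := Jquad hh.1 hh.2 n t a ht
  nlinarith [key, hq, hK]
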